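/- Let G̃ be a Lie group with Lie algebra 𝔤̃, V a vector space, and κ: G̃ × 𝔤̃ → V smooth, linear in the second variable, satisfying κ(g₁g₂,v) = κ(g₂, Ad(g₁⁻¹)v) + κ(g₁,v). Define the symmetric bilinear form ⟨u,v⟩ := (1/2)(∂₁κ(u,v) + ∂₁κ(v,u)), where ∂₁κ(u,v) = (d/dt)|₀ κ(exp(tu),v). Then ⟨·,·⟩ is Ad-invariant: ⟨Ad(g)u, Ad(g)v⟩ = ⟨u,v⟩ for all g ∈ G̃, u,v ∈ 𝔤̃. -/
import Mathlib


/-!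
STATEMENT 13: Let G̃ be a Lie group with Lie algebra 𝔤̃, V a vector space, and κ: G̃ × 𝔤̃ → V
smooth, linear in the second variable, satisfying κ(g₁g₂,v) = κ(g₂, Ad(g₁⁻¹)v) + κ(g₁,v).
Define ⟨u,v⟩ := (1/2)(∂₁κ(u,v) + ∂₁κ(v,u)), where ∂₁κ(u,v) = (d/dt)|₀ κ(exp(tu),v).
Then ⟨·,·⟩ is Ad-invariant: ⟨Ad(g)u, Ad(g)v⟩ = ⟨u,v⟩ for all g, u, v.

The Lie-group data is encoded as in the companion statement: a group G̃, its adjoint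
representation Ad, an exponential map with its standard properties, and derivative
hypotheses defining ∂₁κ = D and expressing (d/dt)|₀ Ad(exp tu) = ad(u).
-/

theorem stmt13 {G : Type*} [Group G]
    {𝔤 : Type*} [LieRing 𝔤] [LieAlgebra ℝ 𝔤]
    {V : Type*} [NormedAddCommGroup V] [NormedSpace ℝ V]
    (Ad : G →* Module.End ℝ 𝔤)
    (exp : 𝔤 → G)
    (hexp_inv : ∀ (u : 𝔤) (t : ℝ), (exp (t • u))⁻¹ = exp ((-t) • u))
    (hconj : ∀ (g : G) (u : 𝔤) (t : ℝ), g⁻¹ * exp (t • u) * g = exp (t • (Ad g⁻¹ u)))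
    (κ : G → (𝔤 →ₗ[ℝ] V))
    (hκ : ∀ (g₁ g₂ : G) (v : 𝔤), κ (g₁ * g₂) v = κ g₂ (Ad g₁⁻¹ v) + κ g₁ v)
    (hAd : ∀ (g : G) (u v : 𝔤),
      HasDerivAt (fun t : ℝ => κ g (Ad (exp (t • u)) v)) (κ g ⁅u, v⁆) 0)
    (D : 𝔤 → 𝔤 → V)
    (hD : ∀ u v : 𝔤, HasDerivAt (fun t : ℝ => κ (exp (t • u)) v) (D u v) 0) :
    ∀ (g : G) (u v : 𝔤),
      (2⁻¹ : ℝ) • (D (Ad g u) (Ad g v) + D (Ad g v) (Ad g u))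
        = (2⁻¹ : ℝ) • (D u v + D v u) := by

  have key : ∀ (g : G) (u v : 𝔤), D (Ad g u) (Ad g v) = D u v - κ g⁻¹ ⁅u, v⁆ := by
    intro g u v
    have hfun : (fun t : ℝ => κ (exp (t • Ad g u)) (Ad g v))
        = fun t : ℝ => κ g⁻¹ (Ad (exp ((-t) • u)) v) + κ (exp (t • u)) v + κ g (Ad g v) := by
      funext t
      have e1 : exp (t • Ad g u) = g * exp (t • u) * g⁻¹ := by
        have := hconj g⁻¹ u t
        rw [inv_inv] at this
        rw [← this]
      have hinv : Ad g⁻¹ (Ad g v) = v := by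
        rw [← Module.End.mul_apply, ← map_mul, inv_mul_cancel, map_one]; rfl
      rw [e1, mul_assoc, hκ g (exp (t • u) * g⁻¹) (Ad g v), hinv,
        hκ (exp (t • u)) g⁻¹ v, hexp_inv]
    have h1 : HasDerivAt (fun t : ℝ => κ (exp (t • Ad g u)) (Ad g v))
        (D (Ad g u) (Ad g v)) 0 := hD _ _
    have hneg : HasDerivAt (fun t : ℝ => κ g⁻¹ (Ad (exp ((-t) • u)) v))
        ((-1 : ℝ) • κ g⁻¹ ⁅u, v⁆) 0 := by
      have h := hAd g⁻¹ u v
      have hn : HasDerivAt (fun t : ℝ => -t) (-1 : ℝ) 0 := (hasDerivAt_id 0).neg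
      have : HasDerivAt ((fun s : ℝ => κ g⁻¹ (Ad (exp (s • u)) v)) ∘ (fun t : ℝ => -t))
          ((-1 : ℝ) • κ g⁻¹ ⁅u, v⁆) 0 := by
        have h0 : HasDerivAt (fun s : ℝ => κ g⁻¹ (Ad (exp (s • u)) v)) (κ g⁻¹ ⁅u, v⁆)
            ((fun t : ℝ => -t) 0) := by simpa only [neg_zero] using h
        exact h0.scomp 0 hn
      simpa only [Function.comp_def] using this
    have h2 : HasDerivAt
        (fun t : ℝ => κ g⁻¹ (Ad (exp ((-t) • u)) v) + κ (exp (t • u)) v + κ g (Ad g v))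
        ((-1 : ℝ) • κ g⁻¹ ⁅u, v⁆ + D u v + 0) 0 :=
      (hneg.add (hD u v)).add (hasDerivAt_const 0 _)
    have := h1.unique (hfun ▸ h2)
    rw [this]
    simp [sub_eq_add_neg]
    abel
  intro g u v
  rw [key g u v, key g v u]
  have : κ g⁻¹ ⁅v, u⁆ = -κ g⁻¹ ⁅u, v⁆ := by rw [← lie_skew, map_neg]
  rw [this]
  abel_nf
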